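/- Let q be a nondegenerate symmetric bilinear form on a finite-dimensional real vector space V, with signature (3, n), n ≥ 0. Let S ⊂ V be a countable (or finite) set of vectors z with q(z,z) < 0. Fix a vector x with q(x,x) > 0. Then there exists a 3-dimensional subspace W ⊂ V containing x such that q|_W is positive definite and W is not orthogonal to any z ∈ S (i.e., no z ∈ S lies in W^⊥). -/

import Mathlib

open Module Finset Polynomial

lemma qsum {V : Type*} [AddCommGroup V] [Module ℝ V] (q : V →ₗ[ℝ] V →ₗ[ℝ] ℝ)
    {k : ℕ} (c : Fin k → ℝ) (f : Fin k → V) (y : V) :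
    q (∑ i, c i • f i) y = ∑ i, c i * q (f i) y := by
  simp [map_sum, LinearMap.sum_apply]

lemma lemA {V : Type*} [AddCommGroup V] [Module ℝ V] (q : V →ₗ[ℝ] V →ₗ[ℝ] ℝ)
    {k : ℕ} (f : Fin k → V) (horth : ∀ i j, i ≠ j → q (f i) (f j) = 0)
    (hpos : ∀ i, 0 < q (f i) (f i)) :
    (∀ w ∈ Submodule.span ℝ (Set.range f), w ≠ 0 → 0 < q w w) ∧
    Module.finrank ℝ (Submodule.span ℝ (Set.range f)) = k := by
  have key : ∀ c : Fin k → ℝ, q (∑ i, c i • f i) (∑ i, c i • f i)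
      = ∑ i, c i ^ 2 * q (f i) (f i) := by
    intro c
    rw [qsum]
    refine Finset.sum_congr rfl fun i _ => ?_
    rw [map_sum]
    simp only [map_smul, smul_eq_mul]
    rw [Finset.sum_eq_single i]
    · ring
    · intro j _ hj
      rw [horth i j (Ne.symm hj)]; ring
    · intro h; exact absurd (Finset.mem_univ i) h
  constructor
  · intro w hw hw0
    obtain ⟨c, hc⟩ := (Submodule.mem_span_range_iff_exists_fun ℝ).mp hw
    have hcne : ∃ i, c i ≠ 0 := by
      by_contra h
      push_neg at h
      apply hw0
      rw [← hc]
      simp [h]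
    obtain ⟨i, hi⟩ := hcne
    rw [← hc, key]
    exact Finset.sum_pos' (fun j _ => mul_nonneg (sq_nonneg _) (hpos j).le)
      ⟨i, Finset.mem_univ i, mul_pos (pow_two_pos_of_ne_zero hi) (hpos i)⟩
  · have hli : LinearIndependent ℝ f := by
      rw [Fintype.linearIndependent_iff]
      intro c hc i
      have : q (∑ j, c j • f j) (f i) = 0 := by rw [hc]; simp
      rw [qsum, Finset.sum_eq_single i] at this
      · rcases mul_eq_zero.mp this with h | h
        · exact h
        · exact absurd h (hpos i).ne'
      · intro j _ hj
        rw [horth j i hj]; ring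
      · intro h; exact absurd (Finset.mem_univ i) h
    rw [finrank_span_eq_card hli, Fintype.card_fin]

lemma lemB {V : Type*} [AddCommGroup V] [Module ℝ V] [FiniteDimensional ℝ V]
    (P : Submodule ℝ V) (hP : 3 ≤ Module.finrank ℝ P) (φ ψ : V →ₗ[ℝ] ℝ) :
    ∃ v ∈ P, v ≠ 0 ∧ φ v = 0 ∧ ψ v = 0 := by
  set Φ : P →ₗ[ℝ] ℝ × ℝ := (φ.comp P.subtype).prod (ψ.comp P.subtype) with hΦ
  have h1 : finrank ℝ (LinearMap.range Φ) ≤ 2 := by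
    have := Submodule.finrank_le (LinearMap.range Φ)
    simpa using this
  have h2 := LinearMap.finrank_range_add_finrank_ker Φ
  have h3 : 0 < finrank ℝ (LinearMap.ker Φ) := by omega
  have : Nontrivial (LinearMap.ker Φ) := Module.nontrivial_of_finrank_pos h3
  obtain ⟨v, hv⟩ := exists_ne (0 : LinearMap.ker Φ)
  have h : (φ (v : P), ψ (v : P)) = 0 := v.2
  obtain ⟨h1, h2⟩ := Prod.mk_eq_zero.mp h
  refine ⟨(v : P), (v : P).2, ?_, h1, h2⟩
  intro h0
  apply hv
  ext
  exact_mod_cast h0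


theorem stmt4' {V : Type*} [AddCommGroup V] [Module ℝ V] [FiniteDimensional ℝ V]
    (q : V →ₗ[ℝ] V →ₗ[ℝ] ℝ) (hsymm : ∀ x y, q x y = q y x)
    (n : ℕ)
    (hsig : ∃ b : Basis (Fin 3 ⊕ Fin n) ℝ V,
      (∀ i j, i ≠ j → q (b i) (b j) = 0) ∧
      (∀ i : Fin 3, q (b (Sum.inl i)) (b (Sum.inl i)) = 1) ∧
      (∀ j : Fin n, q (b (Sum.inr j)) (b (Sum.inr j)) = -1))
    (S : Set V) (hScount : S.Countable) (hSneg : ∀ z ∈ S, q z z < 0)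
    (x : V) (hx : 0 < q x x) :
    ∃ W : Submodule ℝ V, Module.finrank ℝ W = 3 ∧ x ∈ W ∧
      (∀ w ∈ W, w ≠ 0 → 0 < q w w) ∧
      ∀ z ∈ S, ∃ w ∈ W, q w z ≠ 0 := by
  classical
  obtain ⟨b, hborth, hbp, hbn⟩ := hsig
  have hbne : ∀ i, q (b i) (b i) ≠ 0 := by
    rintro (i | j)
    · rw [hbp]; norm_num
    · rw [hbn]; norm_num
  -- nondegeneracy of q
  have hnd : ∀ z : V, (∀ i, q (b i) z = 0) → z = 0 := by
    intro z hz
    rw [← b.forall_coord_eq_zero_iff]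
    intro i
    have hz' : q (b i) z = ∑ j, b.repr z j * q (b i) (b j) := by
      conv_lhs => rw [← b.sum_repr z]
      simp only [map_sum, map_smul, smul_eq_mul]
    rw [hz i, Finset.sum_eq_single i] at hz'
    · rcases mul_eq_zero.mp hz'.symm with h | h
      · simpa [Basis.coord_apply] using h
      · exact absurd h (hbne i)
    · intro j _ hj
      rw [hborth i j (Ne.symm hj)]; ring
    · intro h; exact absurd (Finset.mem_univ i) h
  -- the positive 3-plane P
  set e : Fin 3 → V := fun i => b (Sum.inl i) with he
  have heorth : ∀ i j, i ≠ j → q (e i) (e j) = 0 := fun i j hij =>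
    hborth _ _ (by simpa using hij)
  have hepos : ∀ i, 0 < q (e i) (e i) := fun i => by rw [he]; rw [hbp]; norm_num
  obtain ⟨hPpos, hPrank⟩ := lemA q e heorth hepos
  set P := Submodule.span ℝ (Set.range e) with hP
  -- a positive vector orthogonal to x
  obtain ⟨h₀, h₀P, h₀ne, hxh₀, -⟩ := lemB P (le_of_eq hPrank.symm) (q x) 0
  have hh₀pos : 0 < q h₀ h₀ := hPpos h₀ h₀P h₀ne
  -- the curve
  set b' : Fin (3 + n) → V := fun i => b (finSumFinEquiv.symm i) with hb'
  set gg : ℕ → V := fun k => if h : k < 3 + n then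
      q x x • b' ⟨k, h⟩ - q x (b' ⟨k, h⟩) • x else 0 with hgg
  have hxgg : ∀ k, q x (gg k) = 0 := by
    intro k
    rw [hgg]
    dsimp only
    split
    · simp only [map_sub, map_smul, smul_eq_mul]; ring
    · simp
  set c : ℝ → V := fun t => h₀ + ∑ k ∈ Finset.range (3 + n), t ^ (k + 1) • gg k with hc
  have hxc : ∀ t, q x (c t) = 0 := by
    intro t
    simp [hc, map_sum, map_smul, smul_eq_mul, hxgg, hxh₀]
  set pz : V → ℝ[X] := fun z =>
    C (q h₀ z) + ∑ k ∈ Finset.range (3 + n), C (q (gg k) z) * X ^ (k + 1) with hpz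
  have heval : ∀ z t, q (c t) z = (pz z).eval t := by
    intro z t
    rw [hc, hpz]
    simp only [map_add, map_sum, map_smul, LinearMap.add_apply, LinearMap.sum_apply,
      LinearMap.smul_apply, smul_eq_mul, eval_add, eval_finset_sum, eval_mul, eval_C,
      eval_pow, eval_X]
    congr 1
    exact Finset.sum_congr rfl fun k _ => mul_comm _ _
  have hcoeff : ∀ z k, k < 3 + n → (pz z).coeff (k + 1) = q (gg k) z := by
    intro z k hk
    rw [hpz]
    simp only [coeff_add, coeff_C, Nat.add_one_ne_zero, if_false, finset_sum_coeff,
      coeff_C_mul, coeff_X_pow, zero_add]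
    rw [Finset.sum_eq_single k]
    · simp
    · intro j _ hjk
      rw [if_neg (by omega), mul_zero]
    · intro h; exact absurd (Finset.mem_range.mpr hk) h
  have hpzne : ∀ z ∈ S, q x z = 0 → pz z ≠ 0 := by
    intro z hzS hxz h0
    have hgz : ∀ k, k < 3 + n → q (gg k) z = 0 := by
      intro k hk
      rw [← hcoeff z k hk, h0, coeff_zero]
    have hb'z : ∀ i : Fin (3 + n), q (b' i) z = 0 := by
      intro i
      have h1 := hgz i i.2
      rw [hgg] at h1
      dsimp only at h1
      rw [dif_pos i.2] at h1
      have h2 : q (q x x • b' ⟨(i : ℕ), i.2⟩ - q x (b' ⟨(i : ℕ), i.2⟩) • x) z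
          = q x x * q (b' i) z - q x (b' i) * q x z := by
        simp only [map_sub, map_smul, LinearMap.sub_apply, LinearMap.smul_apply,
          smul_eq_mul, Fin.eta]
      rw [h2, hxz, mul_zero, sub_zero] at h1
      rcases mul_eq_zero.mp h1 with h | h
      · exact absurd h hx.ne'
      · exact h
    have hz0 : z = 0 := by
      apply hnd
      intro i
      have := hb'z (finSumFinEquiv i)
      rw [hb'] at this
      simpa using this
    have := hSneg z hzS
    rw [hz0] at this
    simp at this
  -- the bad set
  set B : Set ℝ := ⋃ z ∈ {z ∈ S | q x z = 0}, {t | (pz z).eval t = 0} with hB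
  have hBc : B.Countable := by
    apply Set.Countable.biUnion (hScount.mono (Set.sep_subset _ _))
    intro z hz
    exact (Polynomial.finite_setOf_isRoot (hpzne z hz.1 hz.2)).countable
  -- continuity of t ↦ q (c t) (c t)
  have hF1 : ∀ t y, q (∑ k ∈ Finset.range (3 + n), t ^ (k + 1) • gg k) y
      = ∑ k ∈ Finset.range (3 + n), t ^ (k + 1) * q (gg k) y := by
    intro t y
    simp [map_sum, LinearMap.sum_apply, map_smul, LinearMap.smul_apply, smul_eq_mul]
  have hF2 : ∀ t y, q y (∑ k ∈ Finset.range (3 + n), t ^ (k + 1) • gg k)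
      = ∑ k ∈ Finset.range (3 + n), t ^ (k + 1) * q y (gg k) := by
    intro t y
    simp [map_sum, map_smul, smul_eq_mul]
  have hFexp : ∀ t, q (c t) (c t) = q h₀ h₀
      + (∑ k ∈ Finset.range (3 + n), t ^ (k + 1) * q h₀ (gg k))
      + ((∑ k ∈ Finset.range (3 + n), t ^ (k + 1) * q (gg k) h₀)
      + ∑ k ∈ Finset.range (3 + n), t ^ (k + 1) *
          ∑ j ∈ Finset.range (3 + n), t ^ (j + 1) * q (gg k) (gg j)) := by
    intro t
    simp only [hc, map_add, LinearMap.add_apply, hF1, hF2]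
    ring
  have hFcont : Continuous fun t => q (c t) (c t) := by
    have : (fun t => q (c t) (c t)) = fun t => q h₀ h₀
        + (∑ k ∈ Finset.range (3 + n), t ^ (k + 1) * q h₀ (gg k))
        + ((∑ k ∈ Finset.range (3 + n), t ^ (k + 1) * q (gg k) h₀)
        + ∑ k ∈ Finset.range (3 + n), t ^ (k + 1) *
            ∑ j ∈ Finset.range (3 + n), t ^ (j + 1) * q (gg k) (gg j)) := by
      funext t
      exact hFexp t
    rw [this]
    fun_prop
  -- pick a good parameter
  have hU : IsOpen {t : ℝ | 0 < q (c t) (c t)} := isOpen_lt continuous_const hFcont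
  have h0U : (0 : ℝ) ∈ {t : ℝ | 0 < q (c t) (c t)} := by
    have hc0 : c 0 = h₀ := by
      rw [hc]
      simp
    simpa [hc0] using hh₀pos
  have hBU : ¬ ({t : ℝ | 0 < q (c t) (c t)} ⊆ B) := by
    intro hsub
    have h1 : (0 : ENNReal) < MeasureTheory.volume {t : ℝ | 0 < q (c t) (c t)} :=
      hU.measure_pos _ ⟨0, h0U⟩
    have h2 := hBc.measure_zero MeasureTheory.volume
    have h3 : MeasureTheory.volume {t : ℝ | 0 < q (c t) (c t)} ≤ MeasureTheory.volume B :=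
      MeasureTheory.measure_mono hsub
    rw [h2] at h3
    exact absurd (le_antisymm h3 zero_le) h1.ne'
  obtain ⟨t₀, ht₀U, ht₀B⟩ := Set.not_subset.mp hBU
  set u := c t₀ with hu
  have hqxu : q x u = 0 := hxc t₀
  have hquu : 0 < q u u := ht₀U
  have hquz : ∀ z ∈ S, q x z = 0 → q u z ≠ 0 := by
    intro z hz hxz
    rw [hu, heval]
    intro h
    exact ht₀B (Set.mem_biUnion (Set.mem_sep hz hxz) h)
  -- third vector
  obtain ⟨v, hvP, hvne, hxv, huv⟩ := lemB P (le_of_eq hPrank.symm) (q x) (q u)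
  have hvv : 0 < q v v := hPpos v hvP hvne
  -- assemble W
  set f : Fin 3 → V := ![x, u, v] with hf
  have e0 : f 0 = x := rfl
  have e1 : f 1 = u := rfl
  have e2 : f 2 = v := rfl
  have hux : q u x = 0 := by rw [hsymm]; exact hqxu
  have hvx : q v x = 0 := by rw [hsymm]; exact hxv
  have hvu : q v u = 0 := by rw [hsymm]; exact huv
  have horth : ∀ i j, i ≠ j → q (f i) (f j) = 0 := by
    intro i j hij
    fin_cases i <;> fin_cases j <;>
      simp only [hf, Matrix.cons_val_zero, Matrix.cons_val_one, Matrix.cons_val_two,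
        Matrix.head_cons, Matrix.tail_cons] <;>
      first | exact absurd rfl hij | assumption
  have hfpos : ∀ i, 0 < q (f i) (f i) := by
    intro i
    fin_cases i <;>
      simp only [hf, Matrix.cons_val_zero, Matrix.cons_val_one, Matrix.cons_val_two,
        Matrix.head_cons, Matrix.tail_cons]
    · exact hx
    · exact hquu
    · exact hvv
  obtain ⟨hWpos, hWrank⟩ := lemA q f horth hfpos
  refine ⟨Submodule.span ℝ (Set.range f), hWrank, ?_, hWpos, ?_⟩
  · exact Submodule.subset_span ⟨0, e0⟩
  · intro z hz
    by_cases hxz : q x z = 0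
    · exact ⟨u, Submodule.subset_span ⟨1, e1⟩, hquz z hz hxz⟩
    · exact ⟨x, Submodule.subset_span ⟨0, e0⟩, hxz⟩



/-- A symmetric bilinear form `q` on a real vector space has signature `(p, n)`. -/
def IsSignature {V : Type*} [AddCommGroup V] [Module ℝ V]
    (q : V →ₗ[ℝ] V →ₗ[ℝ] ℝ) (p n : ℕ) : Prop :=
  ∃ b : Module.Basis (Fin p ⊕ Fin n) ℝ V,
    (∀ i j, i ≠ j → q (b i) (b j) = 0) ∧
    (∀ i : Fin p, q (b (Sum.inl i)) (b (Sum.inl i)) = 1) ∧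
    (∀ j : Fin n, q (b (Sum.inr j)) (b (Sum.inr j)) = -1)

/-- Given a countable set `S` of negative vectors and a positive vector `x`, there is a
3-dimensional positive subspace `W` containing `x` which is not orthogonal to any `z ∈ S`. -/
theorem stmt4 {V : Type*} [AddCommGroup V] [Module ℝ V] [FiniteDimensional ℝ V]
    (q : V →ₗ[ℝ] V →ₗ[ℝ] ℝ) (hsymm : ∀ x y, q x y = q y x)
    (n : ℕ) (hsig : IsSignature q 3 n)
    (S : Set V) (hScount : S.Countable) (hSneg : ∀ z ∈ S, q z z < 0)
    (x : V) (hx : 0 < q x x) :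
    ∃ W : Submodule ℝ V, Module.finrank ℝ W = 3 ∧ x ∈ W ∧
      (∀ w ∈ W, w ≠ 0 → 0 < q w w) ∧
      ∀ z ∈ S, ∃ w ∈ W, q w z ≠ 0 := by
  exact stmt4' q hsymm n hsig S hScount hSneg x hx
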